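/- Let A be a unital C*-algebra, q ∈ (-1,1), u, v > 0 real numbers, and a, c ∈ A satisfying: (i) (star a)·a = u²·1 + q·(a·(star a)); (ii) (star a)·c = q·(c·(star a)); (iii) ‖a^p‖ ≤ C_q·(1-q)^{-p/2}·u^p and ‖c^p‖ ≤ C_q·(1-q)^{-p/2}·v^p for all integers p ≥ 1. Then for all integers n ≥ 1, 0 ≤ m ≤ n and ℓ ≥ 1 there exists X ∈ A such that (star a)^m · a^n · c^ℓ = ([n]_q!/[n-m]_q!)·u^{2m}·(a^{n-m}·c^ℓ) + q^ℓ·X and ‖X‖ ≤ (C_q^6/(1-|q|))·(1-q)^{-(m+n+ℓ)/2}·u^{m+n}·v^ℓ. -/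

import Mathlib

/-- The `q`-number `[n]_q = ∑_{j=0}^{n-1} q^j`. -/
def qNum (q : ℝ) (n : ℕ) : ℝ := ∑ j ∈ Finset.range n, q ^ j

/-- The `q`-factorial `[n]_q! = ∏_{j=1}^n [j]_q`. -/
def qFact (q : ℝ) (n : ℕ) : ℝ := ∏ j ∈ Finset.range n, qNum q (j + 1)

/-- The constant `C_q = ∏_{j=1}^∞ (1-|q|^j)^{-1}`. -/
noncomputable def Cq (q : ℝ) : ℝ := ∏' j : ℕ, (1 - |q| ^ (j + 1))⁻¹

set_option linter.unusedSectionVars false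

section Aux

variable {q : ℝ}

lemma aux_pow_abs_lt_one (hq : |q| < 1) (j : ℕ) : |q| ^ (j + 1) < 1 :=
  pow_lt_one₀ (abs_nonneg q) hq (Nat.succ_ne_zero j)

lemma aux_factor_pos (hq : |q| < 1) (j : ℕ) : 0 < 1 - |q| ^ (j + 1) := by
  linarith [aux_pow_abs_lt_one hq j]

lemma aux_one_le_factor (hq : |q| < 1) (j : ℕ) : 1 ≤ (1 - |q| ^ (j + 1))⁻¹ :=
  one_le_inv₀ (aux_factor_pos hq j) |>.2 (by nlinarith [pow_nonneg (abs_nonneg q) (j+1)])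

lemma aux_summable_log_Cq (hq : |q| < 1) :
    Summable fun n : ℕ => Real.log ((1 - |q| ^ (n + 1))⁻¹) := by
  have hgeo : Summable (fun n : ℕ => (1 - |q|)⁻¹ * |q| ^ (n + 1)) := by
    have := (summable_geometric_of_lt_one (abs_nonneg q) hq).mul_left ((1 - |q|)⁻¹ * |q|)
    refine this.congr fun n => ?_
    rw [pow_succ]
    ring
  refine Summable.of_nonneg_of_le (fun n => Real.log_nonneg (aux_one_le_factor hq n))
    (fun n => ?_) hgeo
  have h1 := aux_factor_pos hq n
  have hlog := Real.log_le_sub_one_of_pos (inv_pos.2 h1)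
  have hx : |q| ^ (n + 1) ≤ |q| := by
    calc |q| ^ (n+1) ≤ |q| ^ 1 := pow_le_pow_of_le_one (abs_nonneg q) hq.le (by omega)
    _ = |q| := pow_one _
  have h2 : (1 - |q| ^ (n + 1))⁻¹ ≤ (1 - |q|)⁻¹ := by
    apply inv_anti₀ (by linarith) (by linarith)
  have h3 : (1 - |q| ^ (n + 1))⁻¹ - 1 = |q| ^ (n+1) * (1 - |q| ^ (n + 1))⁻¹ := by
    field_simp
    ring
  have h4 : |q| ^ (n+1) * (1 - |q| ^ (n + 1))⁻¹ ≤ |q| ^ (n+1) * (1 - |q|)⁻¹ :=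
    mul_le_mul_of_nonneg_left h2 (by positivity)
  linarith

lemma aux_Cq_eq_exp (hq : |q| < 1) :
    Cq q = Real.exp (∑' n : ℕ, Real.log ((1 - |q| ^ (n + 1))⁻¹)) := by
  have := Real.rexp_tsum_eq_tprod (f := fun n : ℕ => (1 - |q| ^ (n + 1))⁻¹)
    (fun n => inv_pos.2 (aux_factor_pos hq n)) (aux_summable_log_Cq hq)
  exact this.symm

lemma aux_finprod_inv_le_Cq (hq : |q| < 1) (S : Finset ℕ) :
    ∏ i ∈ S, (1 - |q| ^ (i + 1))⁻¹ ≤ Cq q := by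
  have h1 : ∏ i ∈ S, (1 - |q| ^ (i + 1))⁻¹
      = Real.exp (∑ i ∈ S, Real.log ((1 - |q| ^ (i + 1))⁻¹)) := by
    rw [Real.exp_sum]
    exact Finset.prod_congr rfl fun i _ =>
      (Real.exp_log (inv_pos.2 (aux_factor_pos hq i))).symm
  rw [h1, aux_Cq_eq_exp hq, Real.exp_le_exp]
  exact (aux_summable_log_Cq hq).sum_le_tsum S
    (fun i _ => Real.log_nonneg (aux_one_le_factor hq i))

lemma aux_one_le_Cq (hq : |q| < 1) : 1 ≤ Cq q := by
  simpa using aux_finprod_inv_le_Cq hq ∅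

lemma aux_Cq_pos (hq : |q| < 1) : 0 < Cq q := lt_of_lt_of_le one_pos (aux_one_le_Cq hq)

lemma aux_prod_one_add_le_Cq (hq : |q| < 1) (S : Finset ℕ) :
    ∏ i ∈ S, (1 + |q| ^ (i + 1)) ≤ Cq q := by
  calc ∏ i ∈ S, (1 + |q| ^ (i + 1)) ≤ ∏ i ∈ S, (1 - |q| ^ (i + 1))⁻¹ := by
        apply Finset.prod_le_prod (fun i _ => by positivity)
        intro i _
        rw [inv_eq_one_div, le_div_iff₀ (aux_factor_pos hq i)]
        nlinarith [sq_nonneg (|q| ^ (i+1))]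
    _ ≤ Cq q := aux_finprod_inv_le_Cq hq S

lemma aux_qNum_eq (hq1 : q < 1) (j : ℕ) : qNum q j = (1 - q ^ j) / (1 - q) := by
  rw [qNum, geom_sum_eq (by intro h; simp [h] at hq1), ← neg_div_neg_eq]
  ring_nf

lemma aux_qNum_pos (hq : q ∈ Set.Ioo (-1 : ℝ) 1) (j : ℕ) : 0 < qNum q (j + 1) := by
  rw [aux_qNum_eq hq.2]
  have habs : |q| < 1 := abs_lt.2 ⟨hq.1, hq.2⟩
  have h1 : q ^ (j+1) < 1 := by
    calc q ^ (j+1) ≤ |q ^ (j+1)| := le_abs_self _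
    _ = |q| ^ (j+1) := abs_pow q _
    _ < 1 := pow_lt_one₀ (abs_nonneg q) habs (Nat.succ_ne_zero j)
  apply div_pos <;> linarith [hq.2]

lemma aux_qNum_le (hq : q ∈ Set.Ioo (-1 : ℝ) 1) (j : ℕ) :
    qNum q (j + 1) ≤ (1 + |q| ^ (j + 1)) * (1 - q)⁻¹ := by
  rw [aux_qNum_eq hq.2, div_eq_mul_inv]
  have h1q : (0:ℝ) < 1 - q := by linarith [hq.2]
  apply mul_le_mul_of_nonneg_right _ (inv_nonneg.2 h1q.le)
  have : -q ^ (j+1) ≤ |q| ^ (j+1) := by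
    rw [← abs_pow]; exact neg_le_abs _
  linarith

lemma aux_qFact_succ (n : ℕ) : qFact q (n + 1) = qFact q n * qNum q (n + 1) :=
  Finset.prod_range_succ _ n

lemma aux_qFact_pos (hq : q ∈ Set.Ioo (-1 : ℝ) 1) (n : ℕ) : 0 < qFact q n :=
  Finset.prod_pos fun j _ => aux_qNum_pos hq j

lemma aux_qFact_eq (n : ℕ) : ∀ m : ℕ, m ≤ n →
    qFact q n = qFact q (n - m) * ∏ j ∈ Finset.range m, qNum q (n - j) := by
  intro m
  induction m with
  | zero => simp
  | succ m ih =>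
    intro h
    have h' : m ≤ n := by omega
    rw [Finset.prod_range_succ, ih h']
    have e : qFact q (n - m) = qFact q (n - (m+1)) * qNum q (n - m) := by
      have e2 : n - m = (n - (m+1)) + 1 := by omega
      rw [e2, aux_qFact_succ]
    rw [e]; ring

/-- `(1-q) ^ (-p/2)` as a function of a natural number `p`. -/
noncomputable def ee (q : ℝ) (p : ℕ) : ℝ := (1 - q) ^ (-(p : ℝ) / 2)

lemma ee_pos (hq1 : q < 1) (p : ℕ) : 0 < ee q p :=
  Real.rpow_pos_of_pos (by linarith) _

lemma ee_mul (hq1 : q < 1) (p r : ℕ) : ee q p * ee q r = ee q (p + r) := by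
  rw [ee, ee, ee, ← Real.rpow_add (by linarith : (0:ℝ) < 1 - q)]
  congr 1
  push_cast
  ring

lemma ee_zero : ee q 0 = 1 := by
  rw [ee]
  norm_num

lemma ee_two_mul (hq1 : q < 1) (k : ℕ) : ((1 - q)⁻¹) ^ k = ee q (2 * k) := by
  rw [ee, show (-(((2 * k : ℕ)) : ℝ) / 2) = -(k : ℝ) by push_cast; ring,
    Real.rpow_neg (by linarith), Real.rpow_natCast, inv_pow]

lemma div_le_div_of_nonneg_right_aux {a b c : ℝ} (h : a ≤ b) (hc : 0 < c) :
    a / c ≤ b / c := by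
  rw [div_eq_mul_inv, div_eq_mul_inv]
  exact mul_le_mul_of_nonneg_right h (inv_nonneg.2 hc.le)

end Aux

section Alg

variable {A : Type*} [NormedRing A] [StarRing A] [CStarRing A] [NormedAlgebra ℝ A]
variable {q u : ℝ} {a c : A}

lemma aux_L1 (h1 : star a * a = (u ^ 2) • (1 : A) + q • (a * star a)) :
    ∀ k : ℕ, star a * a ^ (k + 1)
      = (qNum q (k + 1) * u ^ 2) • a ^ k + (q ^ (k + 1)) • (a ^ (k + 1) * star a) := by
  intro k
  induction k with
  | zero => simpa [qNum] using h1
  | succ k ih =>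
    have e : a ^ (k + 2) = a * a ^ (k + 1) := pow_succ' a (k + 1)
    have hq2 : qNum q (k + 2) = q * qNum q (k + 1) + 1 := geom_sum_succ
    calc star a * a ^ (k + 2) = (star a * a) * a ^ (k + 1) := by rw [e, mul_assoc]
    _ = ((u ^ 2) • (1 : A) + q • (a * star a)) * a ^ (k + 1) := by rw [h1]
    _ = (u ^ 2) • a ^ (k + 1) + q • (a * (star a * a ^ (k + 1))) := by
        rw [add_mul, smul_mul_assoc, smul_mul_assoc, one_mul, mul_assoc]
    _ = (u ^ 2) • a ^ (k + 1)
        + q • (a * ((qNum q (k + 1) * u ^ 2) • a ^ k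
            + (q ^ (k + 1)) • (a ^ (k + 1) * star a))) := by
        rw [ih]
    _ = (qNum q (k + 2) * u ^ 2) • a ^ (k + 1) + (q ^ (k + 2)) • (a ^ (k + 2) * star a) := by
        rw [mul_add, mul_smul_comm, mul_smul_comm, ← pow_succ' a k,
          ← mul_assoc a, ← pow_succ' a (k + 1), hq2]
        match_scalars <;> ring

lemma aux_L2 (h2 : star a * c = q • (c * star a)) :
    ∀ l : ℕ, star a * c ^ l = (q ^ l) • (c ^ l * star a) := by
  intro l
  induction l with
  | zero => simp
  | succ l ih =>
    calc star a * c ^ (l + 1) = (star a * c) * c ^ l := by rw [pow_succ' c l, mul_assoc]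
    _ = q • (c * (star a * c ^ l)) := by rw [h2, smul_mul_assoc, mul_assoc]
    _ = q • (c * ((q ^ l) • (c ^ l * star a))) := by rw [ih]
    _ = (q ^ (l + 1)) • (c ^ (l + 1) * star a) := by
        rw [mul_smul_comm, smul_smul, ← mul_assoc, ← pow_succ' c l, ← pow_succ' q l]

lemma aux_L3 (h1 : star a * a = (u ^ 2) • (1 : A) + q • (a * star a)) (n : ℕ) :
    ∀ m : ℕ, m ≤ n → (star a) ^ m * a ^ n
      = ((∏ j ∈ Finset.range m, qNum q (n - j)) * u ^ (2 * m)) • a ^ (n - m)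
        + ∑ k ∈ Finset.range m,
            ((∏ j ∈ Finset.range k, qNum q (n - j)) * u ^ (2 * k) * q ^ (n - k)) •
              ((star a) ^ (m - 1 - k) * (a ^ (n - k) * star a)) := by
  intro m
  induction m with
  | zero => simp
  | succ m ih =>
    intro h
    have hm : m ≤ n := by omega
    have e1 : star a * a ^ (n - m)
        = (qNum q (n - m) * u ^ 2) • a ^ (n - (m + 1))
          + (q ^ (n - m)) • (a ^ (n - m) * star a) := by
      have h' := aux_L1 h1 (n - m - 1)
      rw [show n - m - 1 + 1 = n - m by omega] at h'
      rw [show n - (m + 1) = n - m - 1 by omega]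
      exact h'
    calc (star a) ^ (m + 1) * a ^ n = star a * ((star a) ^ m * a ^ n) := by
          rw [pow_succ' (star a) m, mul_assoc]
    _ = ((∏ j ∈ Finset.range m, qNum q (n - j)) * u ^ (2 * m)) • (star a * a ^ (n - m))
        + ∑ k ∈ Finset.range m,
            ((∏ j ∈ Finset.range k, qNum q (n - j)) * u ^ (2 * k) * q ^ (n - k)) •
              (star a * ((star a) ^ (m - 1 - k) * (a ^ (n - k) * star a))) := by
        rw [ih hm, mul_add, mul_smul_comm, Finset.mul_sum]
        congr 1
        exact Finset.sum_congr rfl fun k _ => (mul_smul_comm _ _ _)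
    _ = ((∏ j ∈ Finset.range m, qNum q (n - j)) * u ^ (2 * m)) • (star a * a ^ (n - m))
        + ∑ k ∈ Finset.range m,
            ((∏ j ∈ Finset.range k, qNum q (n - j)) * u ^ (2 * k) * q ^ (n - k)) •
              ((star a) ^ (m + 1 - 1 - k) * (a ^ (n - k) * star a)) := by
        congr 1
        refine Finset.sum_congr rfl fun k hk => ?_
        have hk' : k < m := Finset.mem_range.1 hk
        rw [← mul_assoc, ← pow_succ' (star a) (m - 1 - k),
          show m - 1 - k + 1 = m + 1 - 1 - k by omega]
    _ = ((∏ j ∈ Finset.range (m + 1), qNum q (n - j)) * u ^ (2 * (m + 1))) • a ^ (n - (m + 1))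
        + ∑ k ∈ Finset.range (m + 1),
            ((∏ j ∈ Finset.range k, qNum q (n - j)) * u ^ (2 * k) * q ^ (n - k)) •
              ((star a) ^ (m + 1 - 1 - k) * (a ^ (n - k) * star a)) := by
        rw [e1, Finset.sum_range_succ, Finset.prod_range_succ,
          show m + 1 - 1 - m = 0 by omega, pow_zero, one_mul]
        match_scalars <;> ring

end Alg

/-- Abstract form of Corollary 3.2 of the paper. -/
theorem stmt1 (A : Type*) [NormedRing A] [StarRing A] [CStarRing A]
    [NormedAlgebra ℝ A] [CompleteSpace A]
    (q : ℝ) (hq : q ∈ Set.Ioo (-1 : ℝ) 1) (u v : ℝ) (hu : 0 < u) (hv : 0 < v)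
    (a c : A)
    (h1 : star a * a = (u ^ 2) • (1 : A) + q • (a * star a))
    (h2 : star a * c = q • (c * star a))
    (ha : ∀ p : ℕ, 1 ≤ p → ‖a ^ p‖ ≤ Cq q * (1 - q) ^ (-(p : ℝ) / 2) * u ^ p)
    (hc : ∀ p : ℕ, 1 ≤ p → ‖c ^ p‖ ≤ Cq q * (1 - q) ^ (-(p : ℝ) / 2) * v ^ p) :
    ∀ n m ℓ : ℕ, 1 ≤ n → m ≤ n → 1 ≤ ℓ →
      ∃ X : A,
        (star a) ^ m * a ^ n * c ^ ℓ
          = (qFact q n / qFact q (n - m) * u ^ (2 * m)) • (a ^ (n - m) * c ^ ℓ)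
            + (q ^ ℓ) • X
        ∧ ‖X‖ ≤ Cq q ^ 6 / (1 - |q|) * (1 - q) ^ (-((m : ℝ) + n + ℓ) / 2)
            * u ^ (m + n) * v ^ ℓ := by
  intro n m ℓ hn hmn hℓ
  have habs : |q| < 1 := abs_lt.2 ⟨hq.1, hq.2⟩
  have h1q : (0:ℝ) < 1 - q := by linarith [hq.2]
  have h1aq : (0:ℝ) < 1 - |q| := by linarith
  have hK1 : (1:ℝ) ≤ Cq q := aux_one_le_Cq habs
  have hK0 : (0:ℝ) < Cq q := aux_Cq_pos habs
  rcases subsingleton_or_nontrivial A with hS | hNT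
  · refine ⟨0, Subsingleton.elim _ _, ?_⟩
    rw [norm_zero]
    refine mul_nonneg (mul_nonneg (mul_nonneg ?_ ?_) ?_) ?_
    · exact div_nonneg (pow_nonneg hK0.le 6) h1aq.le
    · exact (Real.rpow_pos_of_pos h1q _).le
    · exact pow_nonneg hu.le _
    · exact pow_nonneg hv.le _
  -- main case
  have hA : ∀ p : ℕ, ‖a ^ p‖ ≤ Cq q * ee q p * u ^ p := by
    intro p
    cases p with
    | zero => simpa [ee_zero] using hK1
    | succ p => exact ha (p+1) (by omega)
  have hC : ‖c ^ ℓ‖ ≤ Cq q * ee q ℓ * v ^ ℓ := hc ℓ hℓ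
  have hee : ∀ p : ℕ, (0:ℝ) ≤ ee q p := fun p => (ee_pos hq.2 p).le
  have hstar : ∀ p : ℕ, ‖(star a) ^ p‖ = ‖a ^ p‖ := by
    intro p
    rw [← star_pow, norm_star]
  have hP_pos : ∀ k : ℕ, k ≤ n → 0 < ∏ j ∈ Finset.range k, qNum q (n - j) := by
    intro k hk
    apply Finset.prod_pos
    intro j hj
    have hj' : j < k := Finset.mem_range.1 hj
    have : n - j = (n - j - 1) + 1 := by omega
    rw [this]
    exact aux_qNum_pos hq _
  have hP_le : ∀ k : ℕ, k ≤ n →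
      (∏ j ∈ Finset.range k, qNum q (n - j)) ≤ Cq q * ee q (2 * k) := by
    intro k hk
    calc (∏ j ∈ Finset.range k, qNum q (n - j))
        ≤ ∏ j ∈ Finset.range k, ((1 + |q| ^ (n - j)) * (1 - q)⁻¹) := by
          apply Finset.prod_le_prod
          · intro j hj
            have hj' : j < k := Finset.mem_range.1 hj
            have e : n - j = (n - j - 1) + 1 := by omega
            rw [e]
            exact (aux_qNum_pos hq _).le
          · intro j hj
            have hj' : j < k := Finset.mem_range.1 hj
            have e : n - j = (n - j - 1) + 1 := by omega
            rw [e]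
            exact aux_qNum_le hq _
      _ = (∏ j ∈ Finset.range k, (1 + |q| ^ (n - j))) * ((1 - q)⁻¹) ^ k := by
          rw [Finset.prod_mul_distrib, Finset.prod_const, Finset.card_range]
      _ ≤ Cq q * ee q (2 * k) := by
          rw [← ee_two_mul hq.2 k]
          apply mul_le_mul_of_nonneg_right _ (pow_nonneg (inv_nonneg.2 h1q.le) k)
          have e : ∏ j ∈ Finset.range k, (1 + |q| ^ (n - j))
              = ∏ i ∈ (Finset.range k).image (fun j => n - 1 - j), (1 + |q| ^ (i + 1)) := by
            rw [Finset.prod_image]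
            · refine Finset.prod_congr rfl fun j hj => ?_
              have hj' : j < k := Finset.mem_range.1 hj
              rw [show n - 1 - j + 1 = n - j by omega]
            · intro x hx y hy hxy
              have hx' : x < k := Finset.mem_range.1 hx
              have hy' : y < k := Finset.mem_range.1 hy
              simp only at hxy
              omega
          rw [e]
          exact aux_prod_one_add_le_Cq habs _
  obtain ⟨X, hXdef⟩ : ∃ X : A, X = ∑ k ∈ Finset.range m,
      ((∏ j ∈ Finset.range k, qNum q (n - j)) * u ^ (2 * k) * q ^ (n - k)) •
        ((star a) ^ (m - 1 - k) * (a ^ (n - k) * (c ^ ℓ * star a))) := ⟨_, rfl⟩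
  have hcoef : qFact q n / qFact q (n - m) = ∏ j ∈ Finset.range m, qNum q (n - j) := by
    rw [aux_qFact_eq n m hmn, mul_comm, mul_div_assoc,
      div_self (aux_qFact_pos hq _).ne', mul_one]
  refine ⟨X, ?_, ?_⟩
  · calc (star a) ^ m * a ^ n * c ^ ℓ
        = (((∏ j ∈ Finset.range m, qNum q (n - j)) * u ^ (2 * m)) • a ^ (n - m)
          + ∑ k ∈ Finset.range m,
              ((∏ j ∈ Finset.range k, qNum q (n - j)) * u ^ (2 * k) * q ^ (n - k)) •
                ((star a) ^ (m - 1 - k) * (a ^ (n - k) * star a))) * c ^ ℓ := by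
          rw [aux_L3 h1 n m hmn]
    _ = ((∏ j ∈ Finset.range m, qNum q (n - j)) * u ^ (2 * m)) • (a ^ (n - m) * c ^ ℓ)
        + (∑ k ∈ Finset.range m,
            ((∏ j ∈ Finset.range k, qNum q (n - j)) * u ^ (2 * k) * q ^ (n - k)) •
              ((star a) ^ (m - 1 - k) * (a ^ (n - k) * star a))) * c ^ ℓ := by
          rw [add_mul, smul_mul_assoc]
    _ = ((∏ j ∈ Finset.range m, qNum q (n - j)) * u ^ (2 * m)) • (a ^ (n - m) * c ^ ℓ)
        + (q ^ ℓ) • X := by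
          congr 1
          rw [hXdef, Finset.sum_mul, Finset.smul_sum]
          refine Finset.sum_congr rfl fun k hk => ?_
          rw [smul_mul_assoc, mul_assoc ((star a) ^ (m - 1 - k)), mul_assoc (a ^ (n - k)),
            aux_L2 h2 ℓ, mul_smul_comm, mul_smul_comm, smul_comm]
    _ = (qFact q n / qFact q (n - m) * u ^ (2 * m)) • (a ^ (n - m) * c ^ ℓ)
        + (q ^ ℓ) • X := by rw [hcoef]
  · -- norm bound
    have hterm : ∀ k ∈ Finset.range m,
        ‖((∏ j ∈ Finset.range k, qNum q (n - j)) * u ^ (2 * k) * q ^ (n - k)) •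
            ((star a) ^ (m - 1 - k) * (a ^ (n - k) * (c ^ ℓ * star a)))‖
          ≤ Cq q ^ 5 * ee q (m + n + ℓ) * u ^ (m + n) * v ^ ℓ * |q| ^ (n - k) := by
      intro k hk
      have hkm : k < m := Finset.mem_range.1 hk
      have hkn : k ≤ n := by omega
      have hcoefb : |(∏ j ∈ Finset.range k, qNum q (n - j)) * u ^ (2 * k) * q ^ (n - k)|
          ≤ (Cq q * ee q (2 * k)) * u ^ (2 * k) * |q| ^ (n - k) := by
        rw [abs_mul, abs_mul, abs_pow, abs_pow, abs_of_pos (hP_pos k hkn),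
          abs_of_nonneg hu.le]
        apply mul_le_mul_of_nonneg_right _ (pow_nonneg (abs_nonneg q) _)
        exact mul_le_mul_of_nonneg_right (hP_le k hkn) (pow_nonneg hu.le _)
      have hW : ‖(star a) ^ (m - 1 - k) * (a ^ (n - k) * (c ^ ℓ * star a))‖
          ≤ (Cq q * ee q (m - 1 - k) * u ^ (m - 1 - k))
            * ((Cq q * ee q (n - k) * u ^ (n - k))
              * ((Cq q * ee q ℓ * v ^ ℓ) * (Cq q * ee q 1 * u ^ 1))) := by
        have b1 : ‖star a‖ ≤ Cq q * ee q 1 * u ^ 1 := by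
          rw [show (star a) = (star a) ^ 1 by rw [pow_one], hstar 1, pow_one a]
          simpa [pow_one] using hA 1
        have b2 : ‖c ^ ℓ * star a‖ ≤ (Cq q * ee q ℓ * v ^ ℓ) * (Cq q * ee q 1 * u ^ 1) :=
          (norm_mul_le _ _).trans (mul_le_mul hC b1 (norm_nonneg _)
            (mul_nonneg (mul_nonneg hK0.le (hee ℓ)) (pow_nonneg hv.le _)))
        have b3 : ‖a ^ (n - k) * (c ^ ℓ * star a)‖
            ≤ (Cq q * ee q (n - k) * u ^ (n - k))
              * ((Cq q * ee q ℓ * v ^ ℓ) * (Cq q * ee q 1 * u ^ 1)) :=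
          (norm_mul_le _ _).trans (mul_le_mul (hA _) b2 (norm_nonneg _)
            (mul_nonneg (mul_nonneg hK0.le (hee _)) (pow_nonneg hu.le _)))
        refine (norm_mul_le _ _).trans (mul_le_mul ?_ b3 (norm_nonneg _)
          (mul_nonneg (mul_nonneg hK0.le (hee _)) (pow_nonneg hu.le _)))
        rw [hstar]
        exact hA _
      calc ‖((∏ j ∈ Finset.range k, qNum q (n - j)) * u ^ (2 * k) * q ^ (n - k)) •
            ((star a) ^ (m - 1 - k) * (a ^ (n - k) * (c ^ ℓ * star a)))‖
          = |(∏ j ∈ Finset.range k, qNum q (n - j)) * u ^ (2 * k) * q ^ (n - k)|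
            * ‖(star a) ^ (m - 1 - k) * (a ^ (n - k) * (c ^ ℓ * star a))‖ := by
            rw [norm_smul, Real.norm_eq_abs]
      _ ≤ ((Cq q * ee q (2 * k)) * u ^ (2 * k) * |q| ^ (n - k))
            * ((Cq q * ee q (m - 1 - k) * u ^ (m - 1 - k))
              * ((Cq q * ee q (n - k) * u ^ (n - k))
                * ((Cq q * ee q ℓ * v ^ ℓ) * (Cq q * ee q 1 * u ^ 1)))) :=
            mul_le_mul hcoefb hW (norm_nonneg _)
              (mul_nonneg (mul_nonneg (mul_nonneg hK0.le (hee _)) (pow_nonneg hu.le _))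
                (pow_nonneg (abs_nonneg q) _))
      _ = Cq q ^ 5 * (ee q (2 * k) * ee q (m - 1 - k) * ee q (n - k) * ee q ℓ * ee q 1)
            * (u ^ (2 * k) * u ^ (m - 1 - k) * u ^ (n - k) * u ^ 1) * v ^ ℓ
            * |q| ^ (n - k) := by ring
      _ = Cq q ^ 5 * ee q (m + n + ℓ) * u ^ (m + n) * v ^ ℓ * |q| ^ (n - k) := by
            rw [ee_mul hq.2, ee_mul hq.2, ee_mul hq.2, ee_mul hq.2,
              show 2 * k + (m - 1 - k) + (n - k) + ℓ + 1 = m + n + ℓ by omega,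
              ← pow_add, ← pow_add, ← pow_add,
              show 2 * k + (m - 1 - k) + (n - k) + 1 = m + n by omega]
    have hsum : ∑ k ∈ Finset.range m, |q| ^ (n - k) ≤ (1 - |q|)⁻¹ := by
      calc ∑ k ∈ Finset.range m, |q| ^ (n - k)
          ≤ ∑ k ∈ Finset.range m, |q| ^ (m - 1 - k) := by
            apply Finset.sum_le_sum
            intro k hk
            have hkm : k < m := Finset.mem_range.1 hk
            exact pow_le_pow_of_le_one (abs_nonneg q) habs.le (by omega)
      _ = ∑ k ∈ Finset.range m, |q| ^ k := Finset.sum_range_reflect (fun i => |q| ^ i) m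
      _ ≤ ∑' k : ℕ, |q| ^ k :=
            (summable_geometric_of_lt_one (abs_nonneg q) habs).sum_le_tsum (Finset.range m)
              (fun i _ => by positivity)
      _ = (1 - |q|)⁻¹ := tsum_geometric_of_lt_one (abs_nonneg q) habs
    have hXb : ‖X‖ ≤ Cq q ^ 5 * ee q (m + n + ℓ) * u ^ (m + n) * v ^ ℓ * (1 - |q|)⁻¹ := by
      rw [hXdef]
      refine (norm_sum_le _ _).trans ?_
      calc ∑ k ∈ Finset.range m,
            ‖((∏ j ∈ Finset.range k, qNum q (n - j)) * u ^ (2 * k) * q ^ (n - k)) •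
              ((star a) ^ (m - 1 - k) * (a ^ (n - k) * (c ^ ℓ * star a)))‖
          ≤ ∑ k ∈ Finset.range m,
              Cq q ^ 5 * ee q (m + n + ℓ) * u ^ (m + n) * v ^ ℓ * |q| ^ (n - k) :=
            Finset.sum_le_sum hterm
      _ = Cq q ^ 5 * ee q (m + n + ℓ) * u ^ (m + n) * v ^ ℓ
            * ∑ k ∈ Finset.range m, |q| ^ (n - k) := by rw [← Finset.mul_sum]
      _ ≤ Cq q ^ 5 * ee q (m + n + ℓ) * u ^ (m + n) * v ^ ℓ * (1 - |q|)⁻¹ := by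
          apply mul_le_mul_of_nonneg_left hsum
          exact mul_nonneg (mul_nonneg (mul_nonneg (pow_nonneg hK0.le 5) (hee _))
            (pow_nonneg hu.le _)) (pow_nonneg hv.le _)
    refine hXb.trans ?_
    have hE : ee q (m + n + ℓ) = (1 - q) ^ (-((m : ℝ) + n + ℓ) / 2) := by
      rw [ee]
      congr 1
      push_cast
      ring
    calc Cq q ^ 5 * ee q (m + n + ℓ) * u ^ (m + n) * v ^ ℓ * (1 - |q|)⁻¹
        = (Cq q ^ 5 / (1 - |q|)) * ee q (m + n + ℓ) * u ^ (m + n) * v ^ ℓ := by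
          rw [div_eq_mul_inv]; ring
    _ ≤ (Cq q ^ 6 / (1 - |q|)) * ee q (m + n + ℓ) * u ^ (m + n) * v ^ ℓ := by
          have h56 : Cq q ^ 5 / (1 - |q|) ≤ Cq q ^ 6 / (1 - |q|) :=
            div_le_div_of_nonneg_right_aux (pow_le_pow_right₀ hK1 (by norm_num)) h1aq
          have hee := (ee_pos hq.2 (m + n + ℓ)).le
          exact mul_le_mul_of_nonneg_right (mul_le_mul_of_nonneg_right
            (mul_le_mul_of_nonneg_right h56 hee) (pow_nonneg hu.le _)) (pow_nonneg hv.le _)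
    _ = Cq q ^ 6 / (1 - |q|) * (1 - q) ^ (-((m : ℝ) + n + ℓ) / 2)
          * u ^ (m + n) * v ^ ℓ := by rw [hE]
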